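/- Let 1 ≤ p ≤ n, 1 ≤ i ≤ n, and let σ ∈ J_p(1,…,n+1) be such that σ^{−1}(i) ≤ p and σ^{−1}(i+1) ≥ p+1. Let τ = t ∘ σ, where t is the transposition of the values i and i+1 (so τ agrees with σ except that the value i is replaced by i+1 in the first increasing block and i+1 is replaced by i in the second). Then: (a) τ ∈ J_p(1,…,n+1); (b) (−1)^{τ} = −(−1)^{σ}; (c) for every parity function ε : {1,…,n+1} → ℤ/2, (−1)^{(σ^{−1})ᵒ} = (−1)^{(τ^{−1})ᵒ}·(−1)^{ε(σ^{−1}(i))·ε(σ^{−1}(i+1))}, where the exponent is the product of integer representatives. Moreover σ ↦ τ is an involution interchanging the shuffles with σ^{−1}(i) ≤ p < σ^{−1}(i+1) and those with σ^{−1}(i+1) ≤ p < σ^{−1}(i). -/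

import Mathlib

open Finset

/-- `(-1)^{σᵒ}`: the signature of the induced permutation `σᵒ` of the odd indices
(with respect to the parity function `ε`), computed as `(-1)` to the number of
inversions of `σ` among positions carrying odd values. -/
def oddSign {n : ℕ} (σ : Equiv.Perm (Fin n)) (ε : Fin n → ZMod 2) : ℤ :=
  (-1 : ℤ) ^ (Finset.univ.filter fun q : Fin n × Fin n =>
      q.1 < q.2 ∧ ε (σ q.1) = 1 ∧ ε (σ q.2) = 1 ∧ σ q.2 < σ q.1).card

/-- The set `J_p(1,…,n)` of shuffles: permutations of `{1,…,n}` (here `Fin n`)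
increasing on the first `p` positions and on the remaining `n - p` positions. -/
def shuffles (n p : ℕ) : Finset (Equiv.Perm (Fin n)) :=
  Finset.univ.filter fun σ =>
    (∀ i j : Fin n, i < j → (j : ℕ) < p → σ i < σ j) ∧
    (∀ i j : Fin n, i < j → p ≤ (i : ℕ) → σ i < σ j)

private lemma swap_adj_lt {m : ℕ} {u v : Fin m} (huv : (u : ℕ) + 1 = (v : ℕ))
    {a b : Fin m} (hab : a < b) (h : ¬(a = u ∧ b = v)) :
    Equiv.swap u v a < Equiv.swap u v b := by
  simp only [Equiv.swap_apply_def]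
  split_ifs <;> simp only [Fin.ext_iff, Fin.lt_def, not_and] at * <;> omega

theorem shuffle_swap_adjacent_values (n p i : ℕ) (hp : 1 ≤ p) (hpn : p ≤ n)
    (hi : 1 ≤ i) (hin : i ≤ n)
    (vi vi1 : Fin (n + 1)) (hvi : (vi : ℕ) = i - 1) (hvi1 : (vi1 : ℕ) = i)
    (σ : Equiv.Perm (Fin (n + 1))) (hσ : σ ∈ shuffles (n + 1) p)
    (hlo : ((σ⁻¹ vi : Fin (n + 1)) : ℕ) < p)
    (hhi : p ≤ ((σ⁻¹ vi1 : Fin (n + 1)) : ℕ))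
    (τ : Equiv.Perm (Fin (n + 1))) (hτ : τ = Equiv.swap vi vi1 * σ) :
    τ ∈ shuffles (n + 1) p ∧
    (Equiv.Perm.sign τ : ℤ) = -(Equiv.Perm.sign σ : ℤ) ∧
    (∀ ε : Fin (n + 1) → ZMod 2,
      oddSign σ⁻¹ ε
        = oddSign τ⁻¹ ε * (-1 : ℤ) ^ ((ε (σ⁻¹ vi)).val * (ε (σ⁻¹ vi1)).val)) ∧
    Equiv.swap vi vi1 * τ = σ ∧
    ((τ⁻¹ vi1 : Fin (n + 1)) : ℕ) < p ∧ p ≤ ((τ⁻¹ vi : Fin (n + 1)) : ℕ) := by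
  have hb : (vi : ℕ) + 1 = (vi1 : ℕ) := by omega
  have hne : vi ≠ vi1 := by
    intro h; rw [h] at hb; omega
  have hvv : vi < vi1 := by rw [Fin.lt_def]; omega
  have hστ : ∀ x, τ⁻¹ x = σ⁻¹ (Equiv.swap vi vi1 x) := by
    intro x
    rw [hτ, mul_inv_rev, Equiv.Perm.mul_apply, Equiv.swap_inv]
  have hss : ∀ x, Equiv.swap vi vi1 (Equiv.swap vi vi1 x) = x :=
    fun x => Equiv.swap_apply_self _ _ x
  have hσ' := hσ
  simp only [shuffles, mem_filter, mem_univ, true_and] at hσ'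
  obtain ⟨hσ1, hσ2⟩ := hσ'
  -- part (a)
  have parta : τ ∈ shuffles (n + 1) p := by
    simp only [shuffles, mem_filter, mem_univ, true_and]
    constructor
    · intro a b hab hbp
      rw [hτ, Equiv.Perm.mul_apply, Equiv.Perm.mul_apply]
      refine swap_adj_lt hb (hσ1 a b hab hbp) ?_
      rintro ⟨-, h2⟩
      have hbb : b = σ⁻¹ vi1 := by rw [← h2, ← Equiv.Perm.mul_apply, inv_mul_cancel, Equiv.Perm.one_apply]
      rw [hbb] at hbp; omega
    · intro a b hab hap
      rw [hτ, Equiv.Perm.mul_apply, Equiv.Perm.mul_apply]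
      refine swap_adj_lt hb (hσ2 a b hab hap) ?_
      rintro ⟨h1, -⟩
      have haa : a = σ⁻¹ vi := by rw [← h1, ← Equiv.Perm.mul_apply, inv_mul_cancel, Equiv.Perm.one_apply]
      rw [haa] at hap; omega
  -- part (b)
  have partb : (Equiv.Perm.sign τ : ℤ) = -(Equiv.Perm.sign σ : ℤ) := by
    rw [hτ, Equiv.Perm.sign_mul, Equiv.Perm.sign_swap hne]
    simp
  -- part (c)
  have partc : ∀ ε : Fin (n + 1) → ZMod 2,
      oddSign σ⁻¹ ε
        = oddSign τ⁻¹ ε * (-1 : ℤ) ^ ((ε (σ⁻¹ vi)).val * (ε (σ⁻¹ vi1)).val) := by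
    intro ε
    classical
    set A := Finset.univ.filter (fun q : Fin (n + 1) × Fin (n + 1) =>
      q.1 < q.2 ∧ ε (σ⁻¹ q.1) = 1 ∧ ε (σ⁻¹ q.2) = 1 ∧ σ⁻¹ q.2 < σ⁻¹ q.1) with hA
    set B := Finset.univ.filter (fun q : Fin (n + 1) × Fin (n + 1) =>
      q.1 < q.2 ∧ ε (τ⁻¹ q.1) = 1 ∧ ε (τ⁻¹ q.2) = 1 ∧ τ⁻¹ q.2 < τ⁻¹ q.1) with hB
    set D : Fin (n + 1) × Fin (n + 1) := (vi, vi1) with hD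
    have hgoal : oddSign σ⁻¹ ε = (-1 : ℤ) ^ A.card := rfl
    have hgoal' : oddSign τ⁻¹ ε = (-1 : ℤ) ^ B.card := rfl
    have key : (A.erase D).card = (B.erase D).card := by
      apply Finset.card_nbij' (fun q => (Equiv.swap vi vi1 q.1, Equiv.swap vi vi1 q.2))
        (fun q => (Equiv.swap vi vi1 q.1, Equiv.swap vi vi1 q.2))
      · rintro ⟨a, b⟩ hq
        simp only [hA, hB, hD, Finset.mem_coe, mem_erase, mem_filter, mem_univ, true_and, Ne,
          Prod.mk.injEq, not_and] at hq ⊢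
        obtain ⟨hnd, hab, h1, h2, h3⟩ := hq
        refine ⟨?_, swap_adj_lt hb hab (fun h => hnd h.1 h.2), ?_, ?_, ?_⟩
        · intro e1 e2
          have : a = vi1 := by rw [← hss a, e1, Equiv.swap_apply_left]
          have : b = vi := by rw [← hss b, e2, Equiv.swap_apply_right]
          simp only [Fin.lt_def] at hab
          omega
        · rw [hστ, hss]; exact h1
        · rw [hστ, hss]; exact h2
        · rw [hστ, hστ, hss, hss]; exact h3
      · rintro ⟨a, b⟩ hq
        simp only [hA, hB, hD, Finset.mem_coe, mem_erase, mem_filter, mem_univ, true_and, Ne,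
          Prod.mk.injEq, not_and] at hq ⊢
        obtain ⟨hnd, hab, h1, h2, h3⟩ := hq
        rw [hστ, hστ] at h3
        rw [hστ] at h1 h2
        refine ⟨?_, swap_adj_lt hb hab (fun h => hnd h.1 h.2), h1, h2, h3⟩
        · intro e1 e2
          have : a = vi1 := by rw [← hss a, e1, Equiv.swap_apply_left]
          have : b = vi := by rw [← hss b, e2, Equiv.swap_apply_right]
          simp only [Fin.lt_def] at hab
          omega
      · rintro ⟨a, b⟩ _; simp [hss]
      · rintro ⟨a, b⟩ _; simp [hss]
    by_cases hcase : ε (σ⁻¹ vi) = 1 ∧ ε (σ⁻¹ vi1) = 1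
    · have hDA : D ∉ A := by
        simp only [hA, hD, mem_filter, mem_univ, true_and, not_and]
        intro _ _ _
        rw [Fin.lt_def]; omega
      have hDB : D ∈ B := by
        simp only [hB, hD, mem_filter, mem_univ, true_and]
        have e1 : τ⁻¹ vi = σ⁻¹ vi1 := by rw [hστ, Equiv.swap_apply_left]
        have e2 : τ⁻¹ vi1 = σ⁻¹ vi := by rw [hστ, Equiv.swap_apply_right]
        refine ⟨hvv, ?_, ?_, ?_⟩
        · rw [e1]; exact hcase.2
        · rw [e2]; exact hcase.1
        · rw [e1, e2, Fin.lt_def]; omega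
      have hcA : (A.erase D).card = A.card := by rw [Finset.erase_eq_of_notMem hDA]
      have hcB : B.card = (B.erase D).card + 1 := by
        rw [Finset.card_erase_of_mem hDB]
        have : 0 < B.card := Finset.card_pos.mpr ⟨D, hDB⟩
        omega
      have hval1 : (ε (σ⁻¹ vi)).val = 1 := by rw [hcase.1]; rfl
      have hval2 : (ε (σ⁻¹ vi1)).val = 1 := by rw [hcase.2]; rfl
      rw [hgoal, hgoal', hval1, hval2, hcB, ← key, hcA]
      ring
    · have hval : (ε (σ⁻¹ vi)).val * (ε (σ⁻¹ vi1)).val = 0 := by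
        have hz : ∀ x : ZMod 2, x ≠ 1 → x.val = 0 := by decide
        rcases not_and_or.mp hcase with h | h
        · rw [hz _ h]; ring
        · rw [hz _ h]; ring
      have hDA : D ∉ A := by
        simp only [hA, hD, mem_filter, mem_univ, true_and, not_and]
        intro _ h1 h2
        exact absurd ⟨h1, h2⟩ hcase
      have hDB : D ∉ B := by
        simp only [hB, hD, mem_filter, mem_univ, true_and, not_and]
        intro _ h1 h2
        rw [hστ, Equiv.swap_apply_left] at h1
        rw [hστ, Equiv.swap_apply_right] at h2
        exact absurd ⟨h2, h1⟩ hcase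
      have hcA : (A.erase D).card = A.card := by rw [Finset.erase_eq_of_notMem hDA]
      have hcB : (B.erase D).card = B.card := by rw [Finset.erase_eq_of_notMem hDB]
      rw [hgoal, hgoal', hval, ← hcA, key, hcB]
      ring
  refine ⟨parta, partb, partc, ?_, ?_, ?_⟩
  · rw [hτ, ← mul_assoc, Equiv.swap_mul_self, one_mul]
  · rw [hστ, Equiv.swap_apply_right]; exact hlo
  · rw [hστ, Equiv.swap_apply_left]; exact hhi
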